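/- If f is a nonvanishing entire function of finite order, then there exists a polynomial P such that f(z) = exp(P(z)) for all z ∈ ℂ (Hadamard/Pólya). -/

import Mathlib

open Filter

section Aux
open Metric

lemma exists_entire_log (f : ℂ → ℂ) (hf : Differentiable ℂ f) (hnv : ∀ z, f z ≠ 0) :
    ∃ g : ℂ → ℂ, Differentiable ℂ g ∧ ∀ z, f z = Complex.exp (g z) := by
  have hderiv : Differentiable ℂ (deriv f) := by
    have : AnalyticOnNhd ℂ f Set.univ := hf.differentiableOn.analyticOnNhd isOpen_univ
    exact fun z => ((this.deriv z trivial).differentiableAt)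
  set h : ℂ → ℂ := fun z => deriv f z / f z with h_def
  have hh : Differentiable ℂ h := hderiv.div hf hnv
  have hhc : Continuous h := hh.continuous
  set g : ℂ → ℂ := fun z => Complex.log (f 0) + z * ∫ t in (0:ℝ)..1, h (t * z) with g_def
  -- main identity
  have key : ∀ z, f z = Complex.exp (g z) := by
    intro z
    set G : ℝ → ℂ := fun t => Complex.log (f 0) + z * ∫ s in (0:ℝ)..t, h (s * z) with G_def
    set F : ℝ → ℂ := fun t => f (t * z) * Complex.exp (-(G t)) with F_def
    have hu : ∀ t : ℝ, HasDerivAt (fun t : ℝ => (t : ℂ) * z) z t := by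
      intro t
      simpa using (Complex.ofRealCLM.hasDerivAt (x := t)).mul_const z
    have hvc : Continuous fun s : ℝ => h ((s : ℂ) * z) := by
      exact hhc.comp ((Complex.continuous_ofReal).mul continuous_const)
    have hG : ∀ t : ℝ, HasDerivAt G (z * h ((t:ℂ) * z)) t := by
      intro t
      have hint : HasDerivAt (fun t : ℝ => ∫ s in (0:ℝ)..t, h ((s:ℂ) * z)) (h ((t:ℂ)*z)) t :=
        intervalIntegral.integral_hasDerivAt_right (hvc.intervalIntegrable _ _)
          (hvc.stronglyMeasurableAtFilter _ _) hvc.continuousAt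
      simpa [G_def] using ((hint.const_mul z).const_add (Complex.log (f 0)))
    have hF : ∀ t : ℝ, HasDerivAt F 0 t := by
      intro t
      have h1 : HasDerivAt (fun t : ℝ => f ((t:ℂ) * z)) (deriv f ((t:ℂ)*z) * z) t := by
        have he : HasDerivAt (fun s : ℂ => f (s * z)) (deriv f ((t:ℂ)*z) * z) ((t:ℝ):ℂ) := by
          simpa [Function.comp_def] using (hf (((t:ℝ):ℂ)*z)).hasDerivAt.comp (t:ℂ) ((hasDerivAt_id ((t:ℝ):ℂ)).mul_const z)
        exact he.comp_ofReal
      have h2 : HasDerivAt (fun t : ℝ => Complex.exp (-(G t)))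
          (Complex.exp (-(G t)) * (-(z * h ((t:ℂ)*z)))) t := ((hG t).neg).cexp
      have := h1.mul h2
      refine this.congr_deriv ?_
      have hfz := hnv ((t:ℂ)*z)
      change deriv f ((t:ℂ)*z) * z * Complex.exp (-(G t)) + f ((t:ℂ)*z) * (Complex.exp (-(G t)) * (-(z * (deriv f ((t:ℂ)*z) / f ((t:ℂ)*z))))) = (0:ℂ)
      linear_combination (-deriv f ((t:ℂ)*z) * z * Complex.exp (-(G t))) * mul_inv_cancel₀ hfz
    have hFconst : F 1 = F 0 :=
      is_const_of_deriv_eq_zero (fun t => (hF t).differentiableAt) (fun t => (hF t).deriv) 1 0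
    have hF0 : F 0 = 1 := by
      simp [F_def, G_def, Complex.exp_neg, Complex.exp_log (hnv 0)]
      exact mul_inv_cancel₀ (hnv 0)
    have hF1 : F 1 = f z * Complex.exp (-(g z)) := by
      simp [F_def, G_def, g_def]
    rw [hF1, hF0] at hFconst
    have := congrArg (· * Complex.exp (g z)) hFconst
    simpa [mul_assoc, ← Complex.exp_add, Complex.exp_ne_zero] using this
  -- continuity of g
  have hgc : Continuous g := by
    apply continuous_const.add
    apply continuous_id.mul
    have : Continuous (Function.uncurry fun (z : ℂ) (t : ℝ) => h ((t:ℂ) * z)) :=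
      hhc.comp ((Complex.continuous_ofReal.comp continuous_snd).mul continuous_fst)
    exact intervalIntegral.continuous_parametric_intervalIntegral_of_continuous' this 0 1
  -- differentiability via local branches
  have hgd : Differentiable ℂ g := by
    intro z₀
    set ψ : ℂ → ℂ := fun w => g z₀ + Complex.log (f w / f z₀) with ψ_def
    have hψd : ∀ᶠ w in nhds z₀, DifferentiableAt ℂ ψ w := by
      have hcont : ContinuousAt (fun w => f w / f z₀) z₀ :=
        (hf.continuous.continuousAt).div_const _
      have h1 : ∀ᶠ w in nhds z₀, f w / f z₀ ∈ Metric.ball (1:ℂ) 1 := by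
        apply hcont.eventually_mem
        simpa [div_self (hnv z₀)] using Metric.ball_mem_nhds (1:ℂ) one_pos
      filter_upwards [h1] with w hw
      have hslit : f w / f z₀ ∈ Complex.slitPlane := by
        rw [Complex.mem_slitPlane_iff]
        left
        have := Metric.mem_ball.mp hw
        rw [Complex.dist_eq] at this
        have := (Complex.abs_re_le_norm (f w / f z₀ - 1)).trans_lt this
        have h2 := abs_lt.mp this
        simp only [Complex.sub_re, Complex.one_re] at h2
        linarith [h2.1]
      exact (differentiableAt_const _).add (((hf w).div_const _).clog hslit)
    have heq : g =ᶠ[nhds z₀] ψ := by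
      have hexp : ∀ w, Complex.exp (g w - ψ w) = 1 := by
        intro w
        rw [Complex.exp_sub, ← key w, ψ_def]
        simp only
        rw [Complex.exp_add, Complex.exp_log (div_ne_zero (hnv w) (hnv z₀)), ← key z₀]
        field_simp [hnv z₀, hnv w]
      have hdc : ContinuousAt (fun w => g w - ψ w) z₀ := by
        apply (hgc.continuousAt).sub
        apply continuousAt_const.add
        apply ContinuousAt.clog ((hf.continuous.continuousAt).div_const _)
        rw [div_self (hnv z₀)]
        exact Complex.one_mem_slitPlane
      have hd0 : g z₀ - ψ z₀ = 0 := by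
        simp [ψ_def, div_self (hnv z₀), Complex.log_one]
      have hsmall : ∀ᶠ w in nhds z₀, ‖g w - ψ w‖ < 1 := by
        have := hdc.eventually_mem (Metric.ball_mem_nhds (g z₀ - ψ z₀) one_pos)
        filter_upwards [this] with w hw
        rw [hd0] at hw
        simpa [Complex.dist_eq] using Metric.mem_ball.mp hw
      filter_upwards [hsmall] with w hw
      obtain ⟨n, hn⟩ := Complex.exp_eq_one_iff.mp (hexp w)
      have habs : ‖(n:ℂ) * (2 * Real.pi * Complex.I)‖ < 1 := hn ▸ hw
      have : |(n:ℝ)| * (2 * Real.pi) < 1 := by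
        simpa [abs_of_nonneg Real.pi_pos.le] using habs
      have hn0 : n = 0 := by
        by_contra hne
        have : (1:ℝ) ≤ |(n:ℝ)| := by
          rw [← Int.cast_abs]
          exact_mod_cast Int.one_le_abs (by exact_mod_cast hne)
        nlinarith [Real.pi_gt_three]
      rw [hn0] at hn
      simp only [Int.cast_zero, zero_mul] at hn
      exact sub_eq_zero.mp hn
    exact (hψd.self_of_nhds).congr_of_eventuallyEq heq
  exact ⟨g, hgd, key⟩


lemma borel_caratheodory (g : ℂ → ℂ) (hg : Differentiable ℂ g) {R A : ℝ} (hR : 0 < R)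
    (hA : 0 < A) (hre : ∀ z, ‖z‖ < R → (g z - g 0).re < A) :
    ∀ z, ‖z‖ ≤ R / 2 → ‖g z - g 0‖ ≤ 2 * A := by
  set w : ℂ → ℂ := fun z => g z - g 0 with w_def
  have hwd : Differentiable ℂ w := hg.sub_const _
  have hdenom : ∀ z, ‖z‖ < R → ((2 * A : ℝ) : ℂ) - w z ≠ 0 := by
    intro z hz
    intro hcontra
    have : (((2 * A : ℝ) : ℂ) - w z).re = 0 := by rw [hcontra]; simp
    rw [Complex.sub_re, Complex.ofReal_re] at this
    have := hre z hz
    have hwz : (w z).re = (g z - g 0).re := rfl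
    linarith
  set φ : ℂ → ℂ := fun z => w z / (((2 * A : ℝ) : ℂ) - w z) with φ_def
  have hφd : DifferentiableOn ℂ φ (ball (0:ℂ) R) := by
    apply DifferentiableOn.div (hwd.differentiableOn)
    · exact (differentiable_const _).sub hwd |>.differentiableOn
    · intro z hz
      exact hdenom z (by simpa [Complex.dist_eq] using mem_ball.mp hz)
  have hφ0 : φ 0 = 0 := by simp [φ_def, w_def]
  have habslt : ∀ z, ‖z‖ < R → ‖w z‖ < ‖((2*A:ℝ):ℂ) - w z‖ := by
    intro z hz
    have hrelt := hre z hz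
    have hsq : (‖w z‖)^2 < (‖((2*A:ℝ):ℂ) - w z‖)^2 := by
      rw [Complex.sq_norm, Complex.sq_norm, Complex.normSq_apply, Complex.normSq_apply]
      simp only [Complex.sub_re, Complex.sub_im, Complex.ofReal_re, Complex.ofReal_im, zero_sub,
        neg_mul, neg_neg]
      have : (w z).re < A := by simpa [w_def] using hrelt
      nlinarith
    exact lt_of_pow_lt_pow_left₀ 2 (norm_nonneg _) hsq
  have hmaps : Set.MapsTo φ (ball (0:ℂ) R) (ball (φ 0) 1) := by
    intro z hz
    have hz' : ‖z‖ < R := by simpa [Complex.dist_eq] using mem_ball.mp hz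
    rw [hφ0, mem_ball, Complex.dist_eq, sub_zero, φ_def]
    simp only [norm_div]
    rw [div_lt_one (lt_of_le_of_lt (norm_nonneg _) (habslt z hz'))]
    exact habslt z hz'
  intro z hz
  have hzR : ‖z‖ < R := lt_of_le_of_lt hz (by linarith)
  have hzball : z ∈ ball (0:ℂ) R := by simpa [Complex.dist_eq] using hzR
  have hschwarz := Complex.dist_le_div_mul_dist_of_mapsTo_ball hφd (hmaps.mono_right ball_subset_closedBall) hzball
  rw [hφ0, Complex.dist_eq, Complex.dist_eq, sub_zero, sub_zero] at hschwarz
  have hφle : ‖φ z‖ ≤ 1 / 2 := by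
    refine hschwarz.trans ?_
    rw [div_mul_eq_mul_div, one_mul, div_le_div_iff₀ hR (by norm_num : (0:ℝ) < 2)]
    linarith
  have hident : w z = φ z * (((2*A:ℝ):ℂ) - w z) := by
    rw [φ_def]
    simp only
    rw [div_mul_cancel₀ _ (hdenom z hzR)]
  have habs : ‖w z‖ ≤ (1/2) * (2*A + ‖w z‖) := by
    calc ‖w z‖ = ‖φ z‖ * ‖((2*A:ℝ):ℂ) - w z‖ := by
          conv_lhs => rw [hident]
          rw [norm_mul]
      _ ≤ (1/2) * (2*A + ‖w z‖) := by
          apply mul_le_mul hφle _ (norm_nonneg _) (by norm_num)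
          calc ‖((2*A:ℝ):ℂ) - w z‖
              ≤ ‖((2*A:ℝ):ℂ)‖ + ‖w z‖ := by
                simpa using norm_sub_le (((2*A:ℝ)):ℂ) (w z)
            _ = 2*A + ‖w z‖ := by
                rw [Complex.norm_real, Real.norm_eq_abs, abs_of_pos (by linarith)]
  linarith


lemma poly_of_growth (g : ℂ → ℂ) (hg : Differentiable ℂ g) (C : ℝ) (N : ℕ)
    (hbound : ∀ z, ‖g z‖ ≤ C * (1 + ‖z‖) ^ N) :
    ∃ P : Polynomial ℂ, ∀ z, g z = P.eval z := by
  have hC : 0 ≤ C := by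
    have := (norm_nonneg (g 0)).trans (hbound 0)
    simpa using this
  set p := cauchyPowerSeries g 0 1 with p_def
  have hps : ∀ R : NNReal, 0 < R → HasFPowerSeriesOnBall g (cauchyPowerSeries g 0 R) 0 ⊤ :=
    fun R hR => hg.hasFPowerSeriesOnBall 0 hR
  have huniq : ∀ R : ℝ, 0 < R → cauchyPowerSeries g 0 R = p := by
    intro R hR
    have h1 : HasFPowerSeriesOnBall g (cauchyPowerSeries g 0 R) 0 ⊤ := hps ⟨R, hR.le⟩ hR
    have h2 : HasFPowerSeriesOnBall g p 0 ⊤ := hps 1 one_pos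
    exact h1.hasFPowerSeriesAt.eq_formalMultilinearSeries h2.hasFPowerSeriesAt
  -- coefficient bound
  have hcoeff : ∀ (R : ℝ), 1 ≤ R → ∀ n, ‖p n‖ ≤ C * 2 ^ N * (R ^ (N:ℤ) * (R ^ n)⁻¹) := by
    intro R hR n
    have hR0 : (0:ℝ) < R := lt_of_lt_of_le one_pos hR
    have hcps := norm_cauchyPowerSeries_le g 0 R n
    have hint : (∫ θ : ℝ in (0)..2 * Real.pi, ‖g (circleMap 0 R θ)‖) ≤
        (2 * Real.pi) * (C * (2 * R) ^ N) := by
      have hptw : ∀ θ : ℝ, ‖g (circleMap 0 R θ)‖ ≤ C * (2 * R) ^ N := by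
        intro θ
        refine (hbound _).trans ?_
        have h1 : (1 : ℝ) + ‖circleMap 0 R θ‖ ≤ 2 * R := by
          rw [norm_circleMap_zero, abs_of_pos hR0]; linarith
        have h0 : (0:ℝ) ≤ 1 + ‖circleMap 0 R θ‖ :=
          add_nonneg one_pos.le (norm_nonneg _)
        exact mul_le_mul_of_nonneg_left (pow_le_pow_left₀ h0 h1 N) hC
      calc (∫ θ : ℝ in (0)..2 * Real.pi, ‖g (circleMap 0 R θ)‖)
          ≤ ∫ _ : ℝ in (0)..2 * Real.pi, C * (2 * R) ^ N := by
            apply intervalIntegral.integral_mono_on Real.two_pi_pos.le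
            · exact ((hg.continuous.norm).comp (continuous_circleMap 0 R)).intervalIntegrable _ _
            · exact intervalIntegrable_const
            · exact fun θ _ => hptw θ
        _ = (2 * Real.pi) * (C * (2 * R) ^ N) := by simp; ring
    have hq : ‖cauchyPowerSeries g 0 R n‖ ≤ (C * (2 * R) ^ N) * (R ^ n)⁻¹ := by
      refine hcps.trans ?_
      rw [abs_of_pos hR0, inv_pow]
      have hnn : (0:ℝ) ≤ (R ^ n)⁻¹ := by positivity
      apply mul_le_mul_of_nonneg_right _ hnn
      rw [inv_mul_le_iff₀ Real.two_pi_pos]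
      refine hint.trans (le_of_eq (by ring))
    have hup : cauchyPowerSeries g 0 R = p := huniq R hR0
    rw [hup] at hq
    refine hq.trans (le_of_eq ?_)
    rw [mul_pow, zpow_natCast]
    ring
  have hzero : ∀ n, N < n → p n = 0 := by
    intro n hn
    have key : ∀ ε : ℝ, 0 < ε → ‖p n‖ ≤ ε := by
      intro ε hε
      set R : ℝ := max 1 (C * 2 ^ N / ε) with R_def
      have hR1 : 1 ≤ R := le_max_left _ _
      have hR0 : (0:ℝ) < R := lt_of_lt_of_le one_pos hR1
      refine (hcoeff R hR1 n).trans ?_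
      have h1 : R ^ (N:ℤ) * (R ^ n)⁻¹ ≤ R⁻¹ := by
        rw [← zpow_natCast R n, ← zpow_neg, ← zpow_add₀ hR0.ne', ← zpow_neg_one]
        apply zpow_le_zpow_right₀ hR1
        omega
      have h2 : C * 2 ^ N * R⁻¹ ≤ ε := by
        have hd : C * 2 ^ N / ε ≤ R := le_max_right _ _
        have : C * 2 ^ N ≤ ε * R := by
          rw [← div_le_iff₀' hε]
          exact hd
        calc C * 2 ^ N * R⁻¹ ≤ (ε * R) * R⁻¹ := by gcongr
          _ = ε := by field_simp
      calc C * 2 ^ N * (R ^ (N:ℤ) * (R ^ n)⁻¹) ≤ C * 2 ^ N * R⁻¹ := by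
            apply mul_le_mul_of_nonneg_left h1 (by positivity)
        _ ≤ ε := h2
    have hle : ‖p n‖ ≤ 0 := le_of_forall_pos_le_add (by intro ε hε; simpa using key ε hε)
    simpa using norm_le_zero_iff.mp hle
  -- finish: g equals a polynomial
  refine ⟨∑ k ∈ Finset.range (N + 1), Polynomial.C (p.coeff k) * Polynomial.X ^ k, fun z => ?_⟩
  have hsum := (hps 1 one_pos).hasSum (y := z) (by simp)
  have heval : (fun n => (cauchyPowerSeries g 0 (1:NNReal) n) fun _ => z)
      = fun n => z ^ n • p.coeff n := by
    funext n
    have : cauchyPowerSeries g 0 ((1:NNReal):ℝ) = p := huniq 1 one_pos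
    rw [show (cauchyPowerSeries g 0 ((1:NNReal):ℝ)) = p from this]
    exact p.apply_eq_pow_smul_coeff
  rw [heval] at hsum
  have hfin : HasSum (fun n => z ^ n • p.coeff n)
      (∑ k ∈ Finset.range (N + 1), z ^ k • p.coeff k) := by
    apply hasSum_sum_of_ne_finset_zero
    intro b hb
    have hbN : N < b := by simpa using Nat.lt_of_succ_le (not_lt.mp (by simpa using hb))
    have : p b = 0 := hzero b hbN
    simp [FormalMultilinearSeries.coeff, this]
  have := hsum.unique hfin
  rw [zero_add] at this
  rw [this, Polynomial.eval_finset_sum]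
  refine Finset.sum_congr rfl fun k _ => ?_
  rw [smul_eq_mul, Polynomial.eval_mul, Polynomial.eval_C, Polynomial.eval_pow, Polynomial.eval_X,
    mul_comm]

end Aux

/-- Maximum modulus of `f` on the circle `|z| = r`. -/
noncomputable def maxMod (f : ℂ → ℂ) (r : ℝ) : ℝ :=
  sSup ((fun z => ‖f z‖) '' Metric.sphere (0 : ℂ) r)

/-- The order of an entire function, as an extended real number. -/
noncomputable def order (f : ℂ → ℂ) : EReal :=
  limsup (fun r : ℝ => ((Real.log (Real.log (maxMod f r)) / Real.log r : ℝ) : EReal)) atTop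

section Main
open Metric

/-- A nonvanishing entire function of finite order is `exp` of a polynomial. -/
theorem nonvanishing_finite_order_eq_exp_poly (f : ℂ → ℂ)
    (hf : Differentiable ℂ f) (hnv : ∀ z, f z ≠ 0) (hord : order f < ⊤) :
    ∃ P : Polynomial ℂ, ∀ z, f z = Complex.exp (P.eval z) := by
  obtain ⟨g, hgd, hgexp⟩ := exists_entire_log f hf hnv
  -- real part of g is log |f|
  have hre : ∀ z, (g z).re = Real.log (‖f z‖) := by
    intro z
    rw [hgexp z, Complex.norm_exp, Real.log_exp]
  -- |f z| ≤ maxMod f |z|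
  have hmm : ∀ z, ‖f z‖ ≤ maxMod f (‖z‖) := by
    intro z
    apply le_csSup
    · exact ((isCompact_sphere (0:ℂ) (‖z‖)).image
        (continuous_norm.comp hf.continuous)).bddAbove
    · exact ⟨z, by simp, rfl⟩
  -- extract growth bound from finite order
  obtain ⟨c, hc1, -⟩ := EReal.lt_iff_exists_real_btwn.mp hord
  have hev : ∀ᶠ r : ℝ in atTop,
      Real.log (Real.log (maxMod f r)) / Real.log r < c := by
    have := eventually_lt_of_limsup_lt hc1
    filter_upwards [this] with r hr
    exact_mod_cast hr
  obtain ⟨r₁, hr₁⟩ := eventually_atTop.mp hev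
  set r₀ : ℝ := max r₁ 2 with r₀_def
  have hr₀2 : (2:ℝ) ≤ r₀ := le_max_right _ _
  have hr₀0 : (0:ℝ) < r₀ := by linarith
  set c' : ℝ := max c 1 with c'_def
  have hc'1 : (1:ℝ) ≤ c' := le_max_right _ _
  have hM : ∀ r, r₀ ≤ r → Real.log (maxMod f r) ≤ r ^ c' := by
    intro r hr
    have hr2 : (2:ℝ) ≤ r := le_trans hr₀2 hr
    have hrpos : (0:ℝ) < r := by linarith
    by_cases hL : Real.log (maxMod f r) ≤ 0
    · exact hL.trans (Real.rpow_pos_of_pos hrpos c').le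
    · push_neg at hL
      have hlogr : 0 < Real.log r := Real.log_pos (by linarith)
      have hd := hr₁ r (le_trans (le_max_left _ _) hr)
      have h1 : Real.log (Real.log (maxMod f r)) < c * Real.log r :=
        (div_lt_iff₀ hlogr).mp hd
      have h2 : c * Real.log r ≤ c' * Real.log r :=
        mul_le_mul_of_nonneg_right (le_max_left _ _) hlogr.le
      have h3 : Real.log (maxMod f r) = Real.exp (Real.log (Real.log (maxMod f r))) :=
        (Real.exp_log hL).symm
      rw [h3]
      rw [Real.rpow_def_of_pos hrpos]
      apply Real.exp_le_exp.mpr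
      calc Real.log (Real.log (maxMod f r)) ≤ c' * Real.log r := le_of_lt (lt_of_lt_of_le h1 h2)
        _ = Real.log r * c' := mul_comm _ _
  -- bound re g on the compact ball of radius r₀
  obtain ⟨zB, -, hzB⟩ := (isCompact_closedBall (0:ℂ) r₀).exists_isMaxOn
    ⟨0, by simp [hr₀0.le]⟩ (Complex.continuous_re.comp hgd.continuous).continuousOn
  set B : ℝ := max ((g zB).re) 0 with B_def
  have hB0 : 0 ≤ B := le_max_right _ _
  have hball : ∀ w : ℂ, ‖w‖ ≤ r₀ → (g w).re ≤ B := by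
    intro w hw
    have hwmem : w ∈ closedBall (0:ℂ) r₀ := by simpa [Complex.dist_eq] using hw
    exact le_trans (hzB hwmem) (le_max_left _ _)
  -- global re bound: for |w| < R (with R ≥ r₀): re g w ≤ B + R ^ c'
  have hglob : ∀ (R : ℝ), r₀ ≤ R → ∀ w : ℂ, ‖w‖ ≤ R →
      (g w).re ≤ B + R ^ c' := by
    intro R hR w hw
    by_cases hcase : ‖w‖ ≤ r₀
    · exact le_trans (hball w hcase) (by nlinarith [Real.rpow_pos_of_pos (by linarith : (0:ℝ) < R) c'])
    · push_neg at hcase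
      have h1 : (g w).re ≤ Real.log (maxMod f (‖w‖)) := by
        rw [hre w]
        exact Real.log_le_log (norm_pos_iff.mpr (hnv w)) (hmm w)
      have h2 := hM (‖w‖) hcase.le
      have h3 : (‖w‖ : ℝ) ^ c' ≤ R ^ c' :=
        Real.rpow_le_rpow (norm_nonneg _) hw (by linarith)
      linarith
  -- polynomial growth for g
  set N : ℕ := ⌈c'⌉₊ with N_def
  set C : ℝ := ‖g 0‖ + 2 * (B + ‖g 0‖ + 1) + 2 * (2 * r₀) ^ N with C_def
  have hgrowth : ∀ z, ‖g z‖ ≤ C * (1 + ‖z‖) ^ N := by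
    intro z
    set r : ℝ := max (‖z‖) r₀ with r_def
    have hrr₀ : r₀ ≤ r := le_max_right _ _
    have hrpos : 0 < r := lt_of_lt_of_le hr₀0 hrr₀
    set A : ℝ := B + ‖g 0‖ + 1 + (2*r) ^ c' with A_def
    have hA : 0 < A := by
      have := Real.rpow_pos_of_pos (by linarith : (0:ℝ) < 2*r) c'
      have := norm_nonneg (g 0)
      simp only [A_def]
      linarith
    have hrecond : ∀ w : ℂ, ‖w‖ < 2*r → (g w - g 0).re < A := by
      intro w hw
      have h1 : (g w).re ≤ B + (2*r) ^ c' := hglob (2*r) (by linarith) w hw.le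
      have h2 : -(‖g 0‖) ≤ (g 0).re := by
        have := Complex.abs_re_le_norm (g 0)
        have := abs_le.mp this
        linarith [this.1]
      simp only [Complex.sub_re, A_def]
      linarith
    have hbc := borel_caratheodory g hgd (by linarith : (0:ℝ) < 2*r) hA hrecond z
      (by rw [show (2*r)/2 = r by ring]; exact le_max_left _ _)
    -- |g z| ≤ |g 0| + 2A
    have h4 : ‖g z‖ ≤ ‖g 0‖ + 2 * A := by
      have htr : ‖g z‖ ≤ ‖g z - g 0‖ + ‖g 0‖ := by
        simpa using norm_sub_le_norm_sub_add_norm_sub (g z) (g 0) 0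
      linarith
    -- (2 r)^c' ≤ (2 r₀)^N * (1+|z|)^N
    have h5 : (2*r) ^ c' ≤ (2*r₀) ^ N * (1 + ‖z‖) ^ N := by
      have h2r1 : (1:ℝ) ≤ 2*r := by linarith
      have hcN : c' ≤ (N:ℝ) := Nat.le_ceil c'
      have e1 : (2*r) ^ c' ≤ (2*r) ^ (N:ℝ) :=
        Real.rpow_le_rpow_of_exponent_le h2r1 hcN
      rw [Real.rpow_natCast] at e1
      refine e1.trans ?_
      have hr_le : r ≤ r₀ * (1 + ‖z‖) := by
        have h1 : r₀ * (1 + ‖z‖) = r₀ + r₀ * ‖z‖ := by ring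
        rcases max_cases (‖z‖) r₀ with ⟨he, _⟩ | ⟨he, _⟩ <;> rw [r_def, he] <;>
          nlinarith [norm_nonneg z, hr₀2]
      calc (2*r) ^ N ≤ (2 * (r₀ * (1 + ‖z‖))) ^ N := by
            apply pow_le_pow_left₀ (by linarith) (by linarith)
        _ = (2*r₀) ^ N * (1 + ‖z‖) ^ N := by
            rw [← mul_pow]; ring_nf
    have h6 : (1:ℝ) ≤ (1 + ‖z‖) ^ N :=
      one_le_pow₀ (by linarith [norm_nonneg z])
    have h7 : (0:ℝ) ≤ (1 + ‖z‖) ^ N := by positivity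
    calc ‖g z‖ ≤ ‖g 0‖ + 2 * A := h4
      _ = ‖g 0‖ + 2 * (B + ‖g 0‖ + 1) + 2 * (2*r) ^ c' := by
          rw [A_def]; ring
      _ ≤ (‖g 0‖ + 2 * (B + ‖g 0‖ + 1)) * (1 + ‖z‖) ^ N
          + 2 * ((2*r₀) ^ N * (1 + ‖z‖) ^ N) := by
          have hnn : 0 ≤ ‖g 0‖ + 2 * (B + ‖g 0‖ + 1) := by
            have := norm_nonneg (g 0); linarith
          have e1 : ‖g 0‖ + 2 * (B + ‖g 0‖ + 1)
              ≤ (‖g 0‖ + 2 * (B + ‖g 0‖ + 1)) * (1 + ‖z‖) ^ N :=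
            le_mul_of_one_le_right hnn h6
          have e2 : 2 * (2*r) ^ c' ≤ 2 * ((2*r₀) ^ N * (1 + ‖z‖) ^ N) := by linarith
          linarith
      _ = C * (1 + ‖z‖) ^ N := by rw [C_def]; ring
  obtain ⟨P, hP⟩ := poly_of_growth g hgd C N hgrowth
  exact ⟨P, fun z => by rw [hgexp z, hP z]⟩

end Main
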